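/- Let T be a rooted tree for which the iterated derivative ∂_K^γ(T) is empty for some ordinal γ, where ∂_K^{α+1}(T) removes from ∂_K^α(T) all nodes t such that every node of ∂_K^α(T) above t has only finitely many successors in ∂_K^α(T) (taking intersections at limits). Then every nonempty closed subset X of R(T) contains a point x having a neighborhood in X that is compact. -/

import Mathlib

open Set Topology

/-- An order-theoretic tree: every set of predecessors is a well-ordered chain. -/
def IsOrderTree (T : Type*) [PartialOrder T] : Prop :=
  ∀ t : T, (Set.Iio t).IsWF ∧ IsChain (· ≤ ·) (Set.Iio t)

/-- A ray: a nonempty, downward closed chain with no maximal element. -/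
def IsRay {T : Type*} [PartialOrder T] (R : Set T) : Prop :=
  R.Nonempty ∧ IsChain (· ≤ ·) R ∧ (∀ x ∈ R, ∀ y, y ≤ x → y ∈ R) ∧
    ∀ x ∈ R, ∃ y ∈ R, x < y

/-- The ray space of a tree. -/
def RaySpace (T : Type*) [PartialOrder T] := {R : Set T // IsRay R}

/-- The topology on the ray space, inherited from the product topology on `2^T`:
subbasic open sets are `[t] = {R : t ∈ R}` and their complements. -/
instance {T : Type*} [PartialOrder T] : TopologicalSpace (RaySpace T) :=
  TopologicalSpace.generateFrom
    {U | ∃ t : T, U = {R : RaySpace T | t ∈ R.val} ∨ U = {R : RaySpace T | t ∉ R.val}}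

/-- The immediate successors of `s` within a subtree `S ⊆ T`. -/
def SuccIn {T : Type*} [PartialOrder T] (S : Set T) (s : T) : Set T :=
  {u | u ∈ S ∧ s < u ∧ ∀ w ∈ S, s < w → ¬ w < u}

/-- A node `t` is `S`-compactly trivial if every node of `S` above `t` has only finitely
many immediate successors in `S`. -/
def CompactlyTrivialIn {T : Type*} [PartialOrder T] (S : Set T) (t : T) : Prop :=
  ∀ s ∈ S, t ≤ s → (SuccIn S s).Finite

/-- The iterated derivative `∂_K^α(T)`: at successor stages remove all compactly trivial
nodes, at limit stages take intersections. -/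
noncomputable def derivK (T : Type*) [PartialOrder T] : Ordinal → Set T := fun o =>
  Ordinal.limitRecOn o Set.univ
    (fun _ S => {t ∈ S | ¬ CompactlyTrivialIn S t})
    (fun o _ IH => ⋂ o' : Set.Iio o, IH o'.1 o'.2)


section Aux
variable {T : Type*} [PartialOrder T]

noncomputable def raychar (R : RaySpace T) : T → Bool :=
  fun s => @decide (s ∈ R.val) (Classical.propDecidable _)

lemma raychar_eq_true {R : RaySpace T} {s : T} : raychar R s = true ↔ s ∈ R.val := by
  simp [raychar]

lemma isOpen_coord (s : T) (b : Bool) : IsOpen {g : T → Bool | g s = b} := by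
  have h : {g : T → Bool | g s = b} = (fun g : T → Bool => g s) ⁻¹' {b} := rfl
  rw [h]; exact (isOpen_discrete _).preimage (continuous_apply s)

lemma isInducing_raychar : Topology.IsInducing (raychar (T := T)) := by
  constructor
  apply le_antisymm
  · refine continuous_iff_le_induced.mp (continuous_pi fun s => continuous_discrete_rng.mpr ?_)
    intro b
    cases b
    · have h : (fun R : RaySpace T => raychar R s) ⁻¹' {false} = {R : RaySpace T | s ∉ R.val} := by
        ext R
        simp [Set.mem_preimage, ← raychar_eq_true]
      rw [h]
      exact TopologicalSpace.isOpen_generateFrom_of_mem ⟨s, Or.inr rfl⟩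
    · have h : (fun R : RaySpace T => raychar R s) ⁻¹' {true} = {R : RaySpace T | s ∈ R.val} := by
        ext R
        simp [Set.mem_preimage, raychar_eq_true]
      rw [h]
      exact TopologicalSpace.isOpen_generateFrom_of_mem ⟨s, Or.inl rfl⟩
  · apply le_generateFrom
    rintro U ⟨s, h | h⟩ <;> subst h <;> rw [isOpen_induced_iff]
    · exact ⟨{g | g s = true}, isOpen_coord s true, by ext R; simp [raychar_eq_true]⟩
    · exact ⟨{g | g s = false}, isOpen_coord s false, by ext R; simp [← raychar_eq_true]⟩

end Aux

section Key
variable {T : Type*} [PartialOrder T]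

/-- Characterization of characteristic functions of rays through `t` inside `S`. -/
lemma mem_raychar_image {S : Set T} {t : T} {f : T → Bool} :
    f ∈ raychar '' {R : RaySpace T | t ∈ R.val ∧ R.val ⊆ S} ↔
      f t = true ∧ (∀ s, f s = true → s ∈ S) ∧
      (∀ a b, f a = true → f b = true → a ≠ b → a ≤ b ∨ b ≤ a) ∧
      (∀ a b, f a = true → b ≤ a → f b = true) ∧
      (∀ a, f a = true → ∃ b, f b = true ∧ a < b) := by
  constructor
  · rintro ⟨R, ⟨htR, hRS⟩, rfl⟩
    refine ⟨raychar_eq_true.mpr htR, fun s hs => hRS (raychar_eq_true.mp hs),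
      fun a b ha hb hab => R.2.2.1 (raychar_eq_true.mp ha) (raychar_eq_true.mp hb) hab,
      fun a b ha hba => raychar_eq_true.mpr (R.2.2.2.1 a (raychar_eq_true.mp ha) b hba),
      fun a ha => ?_⟩
    obtain ⟨b, hb, hab⟩ := R.2.2.2.2 a (raychar_eq_true.mp ha)
    exact ⟨b, raychar_eq_true.mpr hb, hab⟩
  · rintro ⟨h1, h2, h3, h4, h5⟩
    refine ⟨⟨{s | f s = true}, ⟨⟨t, h1⟩, fun a ha b hb hab => h3 a b ha hb hab,
      fun a ha b hba => h4 a b ha hba, fun a ha => by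
        obtain ⟨b, hb, hab⟩ := h5 a ha; exact ⟨b, hb, hab⟩⟩⟩, ⟨h1, fun s hs => h2 s hs⟩, ?_⟩
    funext s
    exact Bool.eq_iff_iff.mpr raychar_eq_true

lemma isClosed_raychar_image (htree : IsOrderTree T) (S : Set T) (t : T)
    (hfin : ∀ m ∈ S, (SuccIn S m).Finite) :
    IsClosed (raychar '' {R : RaySpace T | t ∈ R.val ∧ R.val ⊆ S}) := by
  rw [← isOpen_compl_iff, isOpen_iff_forall_mem_open]
  intro f hf
  by_cases h1 : f t = true
  case neg =>
    refine ⟨{g | g t = false}, fun g hg hgD => ?_, isOpen_coord t false,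
      by simpa using Bool.not_eq_true (f t) |>.mp h1⟩
    exact absurd (mem_raychar_image.mp hgD).1 (by simp_all)
  by_cases h2 : ∀ s, f s = true → s ∈ S
  case neg =>
    push_neg at h2
    obtain ⟨s, hs, hsS⟩ := h2
    exact ⟨{g | g s = true}, fun g hg hgD => hsS ((mem_raychar_image.mp hgD).2.1 s hg),
      isOpen_coord s true, hs⟩
  by_cases h3 : ∀ a b, f a = true → f b = true → a ≠ b → a ≤ b ∨ b ≤ a
  case neg =>
    push_neg at h3
    obtain ⟨a, b, ha, hb, hab, hcomp⟩ := h3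
    refine ⟨{g | g a = true} ∩ {g | g b = true}, fun g hg hgD => ?_,
      (isOpen_coord a true).inter (isOpen_coord b true), ha, hb⟩
    exact ((mem_raychar_image.mp hgD).2.2.1 a b hg.1 hg.2 hab).elim hcomp.1 hcomp.2
  by_cases h4 : ∀ a b, f a = true → b ≤ a → f b = true
  case neg =>
    push_neg at h4
    obtain ⟨a, b, ha, hba, hb⟩ := h4
    replace hb : f b = false := Bool.eq_false_iff.mpr hb
    refine ⟨{g | g a = true} ∩ {g | g b = false}, fun g hg hgD => ?_,
      (isOpen_coord a true).inter (isOpen_coord b false), ha, hb⟩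
    have := (mem_raychar_image.mp hgD).2.2.2.1 a b hg.1 hba
    simp_all
  -- remaining case: there must be a maximal element
  have h5 : ¬ ∀ a, f a = true → ∃ b, f b = true ∧ a < b := by
    intro h5
    exact hf (mem_raychar_image.mpr ⟨h1, h2, h3, h4, h5⟩)
  push_neg at h5
  obtain ⟨m, hm, hmax⟩ := h5
  have hmS : m ∈ S := h2 m hm
  have hF : (SuccIn S m).Finite := hfin m hmS
  refine ⟨{g | g m = true} ∩ ⋂ u ∈ SuccIn S m, {g | g u = false},
    fun g hg hgD => ?_, (isOpen_coord m true).inter (hF.isOpen_biInter fun u _ => isOpen_coord u false),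
    hm, ?_⟩
  · -- no g in this nbhd can be in the image
    obtain ⟨hgm, hgsucc⟩ := hg
    obtain ⟨hg1, hg2, hg3, hg4, hg5⟩ := mem_raychar_image.mp hgD
    obtain ⟨u', hu', hmu'⟩ := hg5 m hgm
    -- minimal element of S ∩ Ioc m u'
    have hwf : (S ∩ Set.Ioc m u').IsWF := by
      refine Set.IsWF.mono ((htree u').1.union (Set.finite_singleton u').isWF) ?_
      rintro v ⟨_, hv1, hv2⟩
      rcases lt_or_eq_of_le hv2 with h | h
      · exact Or.inl h
      · exact Or.inr (by simp [h])
    have hne : (S ∩ Set.Ioc m u').Nonempty := ⟨u', hg2 u' hu', hmu', le_refl u'⟩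
    set w := hwf.min hne with hw
    have hwmem := hwf.min_mem hne
    have hwsucc : w ∈ SuccIn S m := by
      refine ⟨hwmem.1, hwmem.2.1, fun v hvS hmv hvw => ?_⟩
      exact hwf.not_lt_min hne ⟨hvS, hmv, le_of_lt (lt_of_lt_of_le hvw hwmem.2.2)⟩ hvw
    have hgw : g w = true := hg4 u' w hu' hwmem.2.2
    have : g w = false := by
      simpa using (Set.mem_iInter₂.mp hgsucc) w hwsucc
    simp_all
  · -- f itself is in the biInter
    refine Set.mem_iInter₂.mpr fun u hu => ?_
    exact Bool.eq_false_iff.mpr fun h => hmax u h hu.2.1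

end Key

section DerivKLemmas
variable (T : Type*) [PartialOrder T]

lemma derivK_zero : derivK T 0 = Set.univ := by
  simp [derivK, Ordinal.limitRecOn_zero]

lemma derivK_succ (o : Ordinal) :
    derivK T (Order.succ o) =
      {t ∈ derivK T o | ¬ CompactlyTrivialIn (derivK T o) t} := by
  simp [derivK, Ordinal.limitRecOn_succ]

lemma derivK_limit (o : Ordinal) (h : Order.IsSuccLimit o) :
    derivK T o = ⋂ o' : Set.Iio o, derivK T o'.1 := by
  simp [derivK, Ordinal.limitRecOn_limit _ _ _ _ h]

end DerivKLemmas


/-- If `∂_K^γ(T) = ∅` for some ordinal `γ`, then every nonempty closed subset `X` of the ray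
space `R(T)` has a point with a compact neighborhood in `X`. -/
theorem compact_nbhd_in_closed_of_derivK_empty {T : Type*} [PartialOrder T]
    (htree : IsOrderTree T) (r : T) (hroot : ∀ t : T, r ≤ t)
    (γ : Ordinal) (hγ : derivK T γ = ∅)
    (X : Set (RaySpace T)) (hX : X.Nonempty) (hXclosed : IsClosed X) :
    ∃ x ∈ X, ∃ U : Set (RaySpace T), x ∈ U ∧ IsOpen U ∧ IsCompact (U ∩ X) := by
  classical
  -- the set of ordinals where some node of some ray of X escapes the derivative
  set O : Set Ordinal := {o | ∃ x ∈ X, ∃ s, s ∈ x.val ∧ s ∉ derivK T o} with hO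
  have hOne : O.Nonempty := by
    obtain ⟨x, hx⟩ := hX
    obtain ⟨s, hs⟩ := x.2.1
    exact ⟨γ, x, hx, s, hs, by simp [hγ]⟩
  have hαO : sInf O ∈ O := csInf_mem hOne
  have hmin : ∀ o < sInf O, o ∉ O := fun o ho hoO => (csInf_le' hoO).not_gt ho
  rcases Ordinal.zero_or_succ_or_isSuccLimit (sInf O) with h0 | ⟨β, hβeq⟩ | hlim
  · rw [h0] at hαO
    obtain ⟨x, hx, s, hs, hsd⟩ := hαO
    rw [derivK_zero] at hsd
    exact absurd (Set.mem_univ s) hsd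
  case inr.inr =>
    exfalso
    obtain ⟨x, hx, s, hs, hsd⟩ := hαO
    rw [derivK_limit T _ hlim] at hsd
    rw [Set.mem_iInter] at hsd
    push_neg at hsd
    obtain ⟨⟨o', ho'⟩, hso'⟩ := hsd
    exact hmin o' ho' ⟨x, hx, s, hs, hso'⟩
  -- successor case
  rw [← hβeq] at hαO hmin
  obtain ⟨x, hx, t, ht, htd⟩ := hαO
  have hβall : ∀ y ∈ X, ∀ s ∈ (y : RaySpace T).val, s ∈ derivK T β := by
    intro y hy s hs
    by_contra hc
    exact hmin β (Order.lt_succ β) ⟨y, hy, s, hs, hc⟩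
  have htβ : t ∈ derivK T β := hβall x hx t ht
  have hCTI : CompactlyTrivialIn (derivK T β) t := by
    rw [derivK_succ] at htd
    by_contra hc
    exact htd ⟨htβ, hc⟩
  -- the open set and the subtree
  set U : Set (RaySpace T) := {R : RaySpace T | t ∈ R.val} with hUdef
  have hUopen : IsOpen U := TopologicalSpace.isOpen_generateFrom_of_mem ⟨t, Or.inl rfl⟩
  set S : Set T := ⋃ y ∈ U ∩ X, (y : RaySpace T).val with hSdef
  have hxUX : x ∈ U ∩ X := ⟨ht, hx⟩
  have htS : t ∈ S := Set.mem_biUnion hxUX ht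
  -- every node of S is comparable with t and the finiteness of immediate successors
  have hfin : ∀ m ∈ S, (SuccIn S m).Finite := by
    intro m hm
    obtain ⟨y, hy, hmy⟩ := Set.mem_iUnion₂.mp hm
    have hcomp : t ≤ m ∨ m < t := by
      rcases eq_or_ne m t with h | h
      · exact Or.inl h.ge
      · rcases y.2.2.1 hmy hy.1 h with h' | h'
        · exact Or.inr (lt_of_le_of_ne h' h)
        · exact Or.inl h'
    rcases hcomp with htm | hmt
    · -- m ≥ t : use compact triviality in the derivative
      have hmβ : m ∈ derivK T β := hβall y hy.2 m hmy
      refine Set.Finite.subset (hCTI m hmβ htm) ?_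
      rintro u ⟨huS, hmu, himm⟩
      obtain ⟨z, hz, huz⟩ := Set.mem_iUnion₂.mp huS
      refine ⟨hβall z hz.2 u huz, hmu, fun v hv hmv hvu => ?_⟩
      -- take the minimal element of derivK T β ∩ Ioc m u
      have hwf : (derivK T β ∩ Set.Ioc m u).IsWF := by
        refine Set.IsWF.mono ((htree u).1.union (Set.finite_singleton u).isWF) ?_
        rintro p ⟨_, hp1, hp2⟩
        rcases lt_or_eq_of_le hp2 with h | h
        · exact Or.inl h
        · exact Or.inr (by simp [h])
      have hne : (derivK T β ∩ Set.Ioc m u).Nonempty := ⟨v, hv, hmv, le_of_lt hvu⟩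
      have hwmem := hwf.min_mem hne
      have hwle : hwf.min hne ≤ u := hwmem.2.2
      have hwz : hwf.min hne ∈ z.val := z.2.2.2.1 u huz _ hwle
      have hwS : hwf.min hne ∈ S := Set.mem_biUnion hz hwz
      have : ¬ hwf.min hne < u := himm _ hwS hwmem.2.1
      have hwu : hwf.min hne = u := ((lt_or_eq_of_le hwle).resolve_left this)
      exact hwf.not_lt_min hne ⟨hv, hmv, le_of_lt hvu⟩ (by rw [hwu]; exact hvu)
    · -- m < t : at most one immediate successor
      have hsub : (SuccIn S m).Subsingleton := by
        have hle : ∀ u ∈ SuccIn S m, u ≤ t := by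
          rintro u ⟨huS, hmu, himm⟩
          obtain ⟨z, hz, huz⟩ := Set.mem_iUnion₂.mp huS
          rcases eq_or_ne u t with h | h
          · exact h.le
          · rcases z.2.2.1 huz hz.1 h with h' | h'
            · exact h'
            · exact absurd (lt_of_le_of_ne h' (Ne.symm h)) (himm t htS hmt)
        rintro u₁ hu₁ u₂ hu₂
        by_contra hne
        have h1 := hle u₁ hu₁
        have h2 := hle u₂ hu₂
        rcases lt_or_eq_of_le h1 with h1' | h1'
        · rcases lt_or_eq_of_le h2 with h2' | h2'
          · rcases (htree t).2 h1' h2' hne with h | h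
            · exact hu₂.2.2 u₁ hu₁.1 hu₁.2.1 (lt_of_le_of_ne h hne)
            · exact hu₁.2.2 u₂ hu₂.1 hu₂.2.1 (lt_of_le_of_ne h (Ne.symm hne))
          · exact hu₂.2.2 u₁ hu₁.1 hu₁.2.1 (h2' ▸ h1')
        · rcases lt_or_eq_of_le h2 with h2' | h2'
          · exact hu₁.2.2 u₂ hu₂.1 hu₂.2.1 (h1' ▸ h2')
          · exact hne (h1'.trans h2'.symm)
      exact hsub.finite
  -- compactness via the characteristic-function embedding
  refine ⟨x, hx, U, ht, hUopen, ?_⟩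
  rw [isInducing_raychar.isCompact_iff]
  obtain ⟨C, hCclosed, hCpre⟩ := isInducing_raychar.isClosed_iff.mp hXclosed
  have himg : raychar '' (U ∩ X) =
      (raychar '' {R : RaySpace T | t ∈ R.val ∧ R.val ⊆ S}) ∩ C := by
    apply Set.Subset.antisymm
    · rintro f ⟨R, hR, rfl⟩
      refine ⟨⟨R, ⟨hR.1, fun s hs => Set.mem_biUnion hR hs⟩, rfl⟩, ?_⟩
      have : R ∈ raychar ⁻¹' C := hCpre ▸ hR.2
      exact this
    · rintro f ⟨⟨R, ⟨htR, _⟩, rfl⟩, hfC⟩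
      have hRX : R ∈ X := by rw [← hCpre]; exact hfC
      exact ⟨R, ⟨htR, hRX⟩, rfl⟩
  rw [himg]
  exact ((isClosed_raychar_image htree S t hfin).isCompact).inter_right hCclosed
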